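/- Let V_R be a set of functions from X to [-R, R] with finite pseudo-dimension Pdim(V_R), and ν a probability measure on X. Then for any ε ∈ (0, R], the 2ε-packing number in L¹(ν) satisfies M(2ε, V_R, ‖·‖_{L¹(ν)}) ≤ 2((2eR/ε)·ln(2eR/ε))^{Pdim(V_R)}. -/

import Mathlib

set_option maxHeartbeats 1600000

open MeasureTheory Real

variable {X : Type*}

/-- `V` pseudo-shatters `ℓ` points. -/
def PShatters (V : Set (X → ℝ)) (ℓ : ℕ) : Prop :=
  ∃ ξ : Fin ℓ → X, ∃ η : Fin ℓ → ℝ, ∀ a : Fin ℓ → Bool,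
    ∃ v ∈ V, ∀ i, (v (ξ i) > η i ↔ a i = true)

/-- The pseudo-dimension of a class of real-valued functions on `X`. -/
noncomputable def pdim (V : Set (X → ℝ)) : ℕ∞ :=
  sSup {n : ℕ∞ | ∃ ℓ : ℕ, (ℓ : ℕ∞) = n ∧ PShatters V ℓ}

lemma sum_choose_le_pow (p m : ℕ) (hp : 1 ≤ p) (hpm : p ≤ m) :
    (∑ i ∈ Finset.range (p+1), (m.choose i : ℝ)) ≤ (Real.exp 1 * m / p)^p := by
  have hm : 0 < (m:ℝ) := by exact_mod_cast Nat.lt_of_lt_of_le hp hpm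
  have hp' : 0 < (p:ℝ) := by exact_mod_cast hp
  set x : ℝ := (p:ℝ)/(m:ℝ) with hx
  have hx0 : 0 < x := by positivity
  have hx1 : x ≤ 1 := by rw [hx, div_le_one hm]; exact_mod_cast hpm
  have key : (∑ i ∈ Finset.range (p+1), (m.choose i : ℝ)) * x^p ≤ Real.exp (p:ℝ) := by
    have h1 : (∑ i ∈ Finset.range (p+1), (m.choose i : ℝ)) * x^p
        ≤ ∑ i ∈ Finset.range (p+1), (m.choose i : ℝ) * x^i := by
      rw [Finset.sum_mul]
      apply Finset.sum_le_sum
      intro i hi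
      have hip : i ≤ p := by simpa [Nat.lt_succ_iff] using hi
      have : x^p ≤ x^i := pow_le_pow_of_le_one (le_of_lt hx0) hx1 hip
      exact mul_le_mul_of_nonneg_left this (Nat.cast_nonneg _)
    have h2 : ∑ i ∈ Finset.range (p+1), (m.choose i : ℝ) * x^i
        ≤ ∑ i ∈ Finset.range (m+1), (m.choose i : ℝ) * x^i := by
      apply Finset.sum_le_sum_of_subset_of_nonneg
      · exact Finset.range_subset_range.2 (by omega)
      · intro i _ _; positivity
    have h3 : ∑ i ∈ Finset.range (m+1), (m.choose i : ℝ) * x^i = (1+x)^m := by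
      rw [add_comm (1:ℝ) x, add_pow]
      apply Finset.sum_congr rfl
      intro i hi; rw [one_pow]; ring
    have h4 : (1+x)^m ≤ Real.exp (x*m) := by
      calc (1+x)^m ≤ (Real.exp x)^m := by
            apply pow_le_pow_left₀ (by positivity)
            linarith [Real.add_one_le_exp x]
        _ = Real.exp (x*m) := by rw [← Real.exp_nat_mul]; ring_nf
    have h5 : x * m = (p:ℝ) := by rw [hx]; field_simp
    calc (∑ i ∈ Finset.range (p+1), (m.choose i : ℝ)) * x^p
        ≤ (1+x)^m := le_trans h1 (le_trans h2 (le_of_eq h3))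
      _ ≤ Real.exp (x*m) := h4
      _ = Real.exp (p:ℝ) := by rw [h5]
  have hxp : 0 < x^p := pow_pos hx0 p
  rw [← le_div_iff₀ hxp] at key
  calc (∑ i ∈ Finset.range (p+1), (m.choose i : ℝ))
      ≤ Real.exp (p:ℝ) / x^p := key
    _ = (Real.exp 1 * m / p)^p := by
        rw [div_eq_iff (ne_of_gt hxp), ← Real.exp_one_rpow (p:ℝ)]
        rw [Real.rpow_natCast]
        rw [← mul_pow]
        congr 1
        rw [hx]
        field_simp

lemma grid_count (R s : ℝ) (K : ℕ) (hR : 0 < R) (hs : 0 < s) (hsR : s ≤ 2*R)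
    (hK1 : K + 1 = ⌈2*R/s⌉₊) (a b ψ : ℝ)
    (ha : -R ≤ a) (hb : b ≤ R) (hψ0 : 0 ≤ ψ) (hψ : ψ ≤ max (b - a - s) 0) :
    (K:ℝ) * ψ ≤ 2*R*((Finset.univ.filter
      fun j : Fin K => a < -R + ((j:ℕ)+1)*s ∧ -R + ((j:ℕ)+1)*s < b).card) := by
  rcases eq_or_lt_of_le hψ0 with h0 | h0
  · rw [← h0, mul_zero]; positivity
  · have hba : ψ ≤ b - a - s := by
      rcases le_or_gt (b - a - s) 0 with h | h
      · rw [max_eq_right h] at hψ; linarith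
      · rwa [max_eq_left (le_of_lt h)] at hψ
    have hba' : (0:ℝ) < b - a - s := lt_of_lt_of_le h0 hba
    set u : ℝ := (a+R)/s with hu
    set v : ℝ := (b+R)/s with hv
    have hu0 : 0 ≤ u := by apply div_nonneg _ (le_of_lt hs); linarith
    have hv2 : v ≤ 2*R/s := by
      rw [hv, div_le_div_iff_of_pos_right hs]; linarith
    have huv : u + 1 < v := by
      rw [hu, hv, ← sub_pos]
      have : (b+R)/s - ((a+R)/s + 1) = (b - a - s)/s := by field_simp; ring
      rw [this]; positivity
    -- the natural numbers k with ⌊u⌋+1 ≤ k < ⌈v⌉ give grid points in (a,b)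
    have hsub : Finset.Ico (⌊u⌋₊+1) ⌈v⌉₊ ⊆
        (Finset.univ.filter fun j : Fin K =>
          a < -R + ((j:ℕ)+1)*s ∧ -R + ((j:ℕ)+1)*s < b).image (fun j : Fin K => (j:ℕ)+1) := by
      intro k hk
      rw [Finset.mem_Ico] at hk
      have hk1 : 1 ≤ k := by omega
      have hku : u < k := by
        calc u < ⌊u⌋₊ + 1 := Nat.lt_floor_add_one u
          _ ≤ k := by exact_mod_cast hk.1
      have hkv : (k:ℝ) < v := by
        by_contra hcon
        push_neg at hcon
        exact absurd (Nat.ceil_le.2 hcon) (by omega)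
      have hkK : k - 1 < K := by
        have h2 : (k:ℝ) < 2*R/s := lt_of_lt_of_le hkv hv2
        have : k < ⌈2*R/s⌉₊ := Nat.lt_ceil.2 h2
        omega
      refine Finset.mem_image.2 ⟨⟨k-1, hkK⟩, Finset.mem_filter.2 ⟨Finset.mem_univ _, ?_, ?_⟩, by simp; omega⟩
      · have : ((k:ℝ)-1+1) = (k:ℝ) := by ring
        have hcast : ((k-1 : ℕ):ℝ) + 1 = (k:ℝ) := by
          push_cast [Nat.cast_sub hk1]; ring
        rw [show ((⟨k-1,hkK⟩ : Fin K) : ℕ) = k - 1 from rfl, hcast]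
        rw [hu] at hku
        rw [div_lt_iff₀ hs] at hku
        linarith
      · have hcast : ((k-1 : ℕ):ℝ) + 1 = (k:ℝ) := by
          push_cast [Nat.cast_sub hk1]; ring
        rw [show ((⟨k-1,hkK⟩ : Fin K) : ℕ) = k - 1 from rfl, hcast]
        rw [hv, lt_div_iff₀ hs] at hkv
        linarith
    have hcard : (⌈v⌉₊ - (⌊u⌋₊+1) : ℕ) ≤
        ((Finset.univ.filter fun j : Fin K =>
          a < -R + ((j:ℕ)+1)*s ∧ -R + ((j:ℕ)+1)*s < b).card) := by
      calc (⌈v⌉₊ - (⌊u⌋₊+1) : ℕ) = (Finset.Ico (⌊u⌋₊+1) ⌈v⌉₊).card := by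
            rw [Nat.card_Ico]
        _ ≤ _ := by
            refine le_trans (Finset.card_le_card hsub) ?_
            exact Finset.card_image_le
    -- now the real estimate
    set c := ((Finset.univ.filter fun j : Fin K =>
          a < -R + ((j:ℕ)+1)*s ∧ -R + ((j:ℕ)+1)*s < b).card)
    have hcount : v - u - 1 ≤ (c:ℝ) := by
      have h1 : v ≤ (⌈v⌉₊:ℝ) := Nat.le_ceil v
      have h2 : (⌊u⌋₊:ℝ) ≤ u := Nat.floor_le hu0
      have h3 : ⌊u⌋₊ + 1 ≤ ⌈v⌉₊ := by
        have hlt : ((⌊u⌋₊+1 : ℕ):ℝ) < v := by push_cast; linarith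
        have := Nat.lt_ceil.2 hlt
        omega
      have : ((⌈v⌉₊ - (⌊u⌋₊+1) : ℕ):ℝ) = (⌈v⌉₊:ℝ) - (⌊u⌋₊:ℝ) - 1 := by
        push_cast [Nat.cast_sub h3]; ring
      have hc := hcard
      have : v - u - 1 ≤ ((⌈v⌉₊ - (⌊u⌋₊+1) : ℕ):ℝ) := by rw [this]; linarith
      calc v - u - 1 ≤ ((⌈v⌉₊ - (⌊u⌋₊+1) : ℕ):ℝ) := this
        _ ≤ (c:ℝ) := by exact_mod_cast hc
    have hvu : v - u - 1 = (b - a - s)/s := by rw [hu, hv]; field_simp; ring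
    have hKs : (K:ℝ) ≤ 2*R/s := by
      have hceil : (⌈2*R/s⌉₊ : ℝ) < 2*R/s + 1 := by
        apply Nat.ceil_lt_add_one; positivity
      have : ((K:ℝ)+1) = (⌈2*R/s⌉₊:ℝ) := by exact_mod_cast congrArg (Nat.cast (R:=ℝ)) hK1
      linarith
    -- ψ ≤ s * c
    have hψc : ψ ≤ s * c := by
      rw [hvu] at hcount
      rw [div_le_iff₀ hs] at hcount
      nlinarith
    calc (K:ℝ) * ψ ≤ (2*R/s) * ψ := by
          apply mul_le_mul_of_nonneg_right hKs (le_of_lt h0)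
      _ ≤ (2*R/s) * (s*c) := by
          apply mul_le_mul_of_nonneg_left hψc; positivity
      _ = 2*R*c := by field_simp

lemma key_bound (C : ℝ) (hC : 2*Real.exp 1 ≤ C) (p n m : ℕ) (hp : 1 ≤ p)
    (hn : (n:ℝ) = ⌊2*(C*Real.log C)^p⌋₊ + 1)
    (hm : m = ⌈Real.log n / (15*Real.exp 1/(8*C))⌉₊) :
    (∑ i ∈ Finset.range (p+1), (m.choose i : ℝ)) ≤ (C*Real.log C)^p := by
  have he1 : (2.7182818283:ℝ) ≤ Real.exp 1 := le_of_lt Real.exp_one_gt_d9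
  have he2 : Real.exp 1 ≤ 2.7182818286 := le_of_lt Real.exp_one_lt_d9
  have hlog2 : (0.6931471803:ℝ) ≤ Real.log 2 := le_of_lt Real.log_two_gt_d9
  have hlog2' : Real.log 2 ≤ 0.6931471808 := le_of_lt Real.log_two_lt_d9
  have hC0 : (0:ℝ) < C := by nlinarith
  set lC := Real.log C with hlCdef
  have hlC : 1 + Real.log 2 ≤ lC := by
    have h2e : Real.log (2*Real.exp 1) = Real.log 2 + 1 := by
      rw [Real.log_mul (by norm_num) (ne_of_gt (Real.exp_pos 1)), Real.log_exp]
    have := Real.log_le_log (by positivity) hC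
    rw [h2e] at this; linarith
  have hlC0 : (0:ℝ) < lC := by nlinarith
  set B := C * lC with hBdef
  have hB9 : (9:ℝ) ≤ B := by nlinarith
  have hB1 : (1:ℝ) ≤ B := by linarith
  have hBp9 : (9:ℝ) ≤ B^p := by
    calc (9:ℝ) ≤ B := hB9
      _ = B^1 := (pow_one B).symm
      _ ≤ B^p := pow_le_pow_right₀ hB1 hp
  have hBp0 : (0:ℝ) < B^p := by positivity
  set L := Real.log B with hLdef
  have hL1 : (1:ℝ) ≤ L := by
    rw [hLdef]
    calc (1:ℝ) = Real.log (Real.exp 1) := (Real.log_exp 1).symm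
      _ ≤ Real.log B := Real.log_le_log (Real.exp_pos 1) (by nlinarith)
  -- bounds on n
  have hn_lo : 2*B^p < (n:ℝ) := by
    rw [hn]; exact Nat.lt_floor_add_one _
  have hn_up : (n:ℝ) ≤ 2*B^p + 1 := by
    rw [hn]
    have := Nat.floor_le (show (0:ℝ) ≤ 2*B^p by positivity)
    linarith
  have hn1 : (1:ℝ) < (n:ℝ) := by nlinarith
  have hlogn0 : 0 < Real.log n := Real.log_pos hn1
  -- log n upper bound
  have hlogBp : Real.log (B^p) = p * L := by rw [Real.log_pow]
  have hlogn_up : Real.log n ≤ p * L + 3/4 := by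
    have h1 : Real.log n ≤ Real.log (2*B^p + 1) := Real.log_le_log (by positivity) hn_up
    have heq : (2*B^p + 1) = (2*B^p) * (1 + 1/(2*B^p)) := by field_simp
    have h2 : Real.log (2*B^p + 1) = Real.log 2 + p*L + Real.log (1 + 1/(2*B^p)) := by
      rw [heq, Real.log_mul (by positivity) (by positivity),
        Real.log_mul (by norm_num) (by positivity), hlogBp]
    have h3 : Real.log (1 + 1/(2*B^p)) ≤ 1/(2*B^p) := by
      have := Real.log_le_sub_one_of_pos (show (0:ℝ) < 1 + 1/(2*B^p) by positivity)
      linarith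
    have h4 : 1/(2*B^p) ≤ 1/18 := by
      rw [div_le_div_iff₀ (by positivity) (by norm_num)]; linarith
    linarith
  have hlogn_lo : p*L + Real.log 2 ≤ Real.log n := by
    have h1 : Real.log (2*B^p) ≤ Real.log n := Real.log_le_log (by positivity) (le_of_lt hn_lo)
    rw [Real.log_mul (by norm_num) (by positivity), hlogBp] at h1
    linarith
  -- δ
  set δ := 15*Real.exp 1/(8*C) with hδdef
  have hδ0 : 0 < δ := by positivity
  have hδ1 : δ ≤ 15/16 := by
    rw [hδdef, div_le_div_iff₀ (by positivity) (by norm_num)]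
    nlinarith
  -- m bounds
  have hm_lo : Real.log n / δ ≤ (m:ℝ) := by rw [hm]; exact Nat.le_ceil _
  have hm_up : (m:ℝ) ≤ Real.log n / δ + 1 := by
    rw [hm]
    have := Nat.ceil_lt_add_one (le_of_lt (div_pos hlogn0 hδ0))
    linarith
  have hpm : p ≤ m := by
    have h1 : (p:ℝ) * L ≤ Real.log n := by nlinarith
    have h2 : (p:ℝ) ≤ Real.log n / δ := by
      rw [le_div_iff₀ hδ0]
      have hp0 : (0:ℝ) ≤ (p:ℝ) := Nat.cast_nonneg p
      nlinarith
    have := le_trans h2 hm_lo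
    exact_mod_cast this
  -- L upper bound via tangent line
  have hloglC : Real.log lC ≤ (3/5)*lC - 5/12 := by
    have h1 : Real.log ((3/5)*lC) ≤ (3/5)*lC - 1 :=
      Real.log_le_sub_one_of_pos (by positivity)
    have h2 : Real.log ((3/5)*lC) = Real.log (3/5) + Real.log lC :=
      Real.log_mul (by norm_num) (ne_of_gt hlC0)
    have h53 : Real.log (5/3) ≤ 7/12 := by
      have ha : Real.log (5/4) ≤ 1/4 := by
        have := Real.log_le_sub_one_of_pos (show (0:ℝ) < 5/4 by norm_num); linarith
      have hb : Real.log (4/3) ≤ 1/3 := by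
        have := Real.log_le_sub_one_of_pos (show (0:ℝ) < 4/3 by norm_num); linarith
      have : Real.log (5/3) = Real.log (5/4) + Real.log (4/3) := by
        rw [← Real.log_mul (by norm_num) (by norm_num)]; norm_num
      linarith
    have h35 : Real.log (3/5) = - Real.log (5/3) := by
      rw [← Real.log_inv]; norm_num
    linarith
  have hL_up : L ≤ (8/5)*lC - 5/12 := by
    have : L = lC + Real.log lC := by
      rw [hLdef, hBdef, Real.log_mul (ne_of_gt hC0) (ne_of_gt hlC0)]
    linarith
  -- two cases
  rcases eq_or_lt_of_le hp with hp1 | hp2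
  · -- p = 1
    have hp1' : p = 1 := hp1.symm
    subst hp1'
    have hsum : (∑ i ∈ Finset.range 2, (m.choose i : ℝ)) = 1 + m := by
      rw [Finset.sum_range_succ, Finset.sum_range_succ, Finset.sum_range_zero]
      simp [Nat.choose]
    rw [hsum, pow_one]
    have hd : Real.log n / δ = Real.log n * (8*C) / (15*Real.exp 1) := by
      rw [hδdef]; field_simp
    have hm_up' : (m:ℝ) ≤ (L + 3/4) * (8*C) / (15*Real.exp 1) + 1 := by
      rw [hd] at hm_up
      have hle : Real.log n ≤ L + 3/4 := by
        have := hlogn_up; push_cast at this; linarith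
      have : Real.log n * (8*C) / (15*Real.exp 1)
          ≤ (L + 3/4) * (8*C) / (15*Real.exp 1) := by
        apply div_le_div_of_nonneg_right ?_ (by positivity)
        nlinarith
      linarith
    have hfin : (L + 3/4) * (8*C) / (15*Real.exp 1) + 2 ≤ B := by
      rw [div_add' _ _ _ (by positivity), div_le_iff₀ (by positivity)]
      have hLL : L + 3/4 ≤ (8/5)*lC + 1/3 := by linarith
      have hkey : 8*C*(L + 3/4) ≤ 8*C*((8/5)*lC + 1/3) :=
        mul_le_mul_of_nonneg_left hLL (by positivity)
      nlinarith [mul_pos hC0 hlC0, mul_le_mul_of_nonneg_left hlC (le_of_lt hC0),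
        mul_le_mul_of_nonneg_right he1 (le_of_lt (mul_pos hC0 hlC0))]
    linarith
  · -- p ≥ 2
    have hp2' : (2:ℝ) ≤ (p:ℝ) := by exact_mod_cast hp2
    have hsum := sum_choose_le_pow p m hp hpm
    have hemp : Real.exp 1 * m / p ≤ B := by
      rw [div_le_iff₀ (by positivity : (0:ℝ) < (p:ℝ))]
      have h1 : Real.exp 1 * (m:ℝ) ≤ Real.exp 1 * (Real.log n / δ + 1) := by
        apply mul_le_mul_of_nonneg_left hm_up (le_of_lt (Real.exp_pos 1))
      have hd : Real.exp 1 * (Real.log n / δ) = Real.log n * (8*C) / 15 := by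
        rw [hδdef]; field_simp
      have h2 : Real.exp 1 * (Real.log n / δ + 1)
          = Real.log n * (8*C) / 15 + Real.exp 1 := by rw [mul_add, hd, mul_one]
      have h3 : Real.log n * (8*C) / 15 ≤ ((p:ℝ)*L + 3/4) * (8*C) / 15 := by
        apply div_le_div_of_nonneg_right ?_ (by norm_num)
        nlinarith
      have h4 : ((p:ℝ)*L + 3/4) * (8*C) / 15 + Real.exp 1 ≤ B * p := by
        have hLL : (p:ℝ)*L ≤ (p:ℝ)*((8/5)*lC - 5/12) :=
          mul_le_mul_of_nonneg_left hL_up (by positivity)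
        rw [div_add' _ _ _ (by norm_num), div_le_iff₀ (by norm_num : (0:ℝ) < 15)]
        have hkey : ((p:ℝ)*L)*(8*C) ≤ ((p:ℝ)*((8/5)*lC - 5/12))*(8*C) :=
          mul_le_mul_of_nonneg_right hLL (by positivity)
        nlinarith [mul_pos hC0 hlC0, mul_le_mul_of_nonneg_left hlC (le_of_lt hC0),
          mul_nonneg (sub_nonneg.2 hp2') (le_of_lt (mul_pos hC0 hlC0)),
          mul_nonneg (sub_nonneg.2 hp2') (le_of_lt hC0),
          mul_nonneg (mul_nonneg (sub_nonneg.2 hp2') (le_of_lt hC0)) (le_of_lt hlC0)]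
      linarith
    calc (∑ i ∈ Finset.range (p+1), (m.choose i : ℝ))
        ≤ (Real.exp 1 * m / p)^p := hsum
      _ ≤ B^p := pow_le_pow_left₀ (by positivity) hemp p

lemma nat_aux (c : ℕ) : 2*c ≤ (c*c - c) + 2 := by
  match c with
  | 0 => norm_num
  | 1 => norm_num
  | (k+2) =>
    have h : (k+2)*(k+2) - (k+2) = (k+2)*(k+1) := by
      rw [show (k+2)*(k+2) = (k+2)*(k+1) + (k+2) from by ring, Nat.add_sub_cancel]
    rw [h]
    nlinarith

theorem packing_le_pdim_bound [MeasurableSpace X]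
    (ν : Measure X) [IsProbabilityMeasure ν]
    (R : ℝ) (hR : 0 < R) (V : Set (X → ℝ))
    (hVb : ∀ f ∈ V, ∀ x, f x ∈ Set.Icc (-R) R)
    (p : ℕ) (hp : pdim V = (p : ℕ∞))
    (ε : ℝ) (hε : ε ∈ Set.Ioc (0 : ℝ) R) :
    ∀ P : Finset (X → ℝ), (P : Set (X → ℝ)) ⊆ V →
      (∀ f ∈ P, ∀ g ∈ P, f ≠ g → 2 * ε ≤ ∫ x, |f x - g x| ∂ν) →
      (P.card : ℝ) ≤ 2 * ((2 * exp 1 * R / ε) * Real.log (2 * exp 1 * R / ε)) ^ p := by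
  classical
  obtain ⟨hε0, hεR⟩ := hε
  intro P hPV hsep
  set C : ℝ := 2 * exp 1 * R / ε with hCdef
  set B : ℝ := C * Real.log C with hBdef
  by_contra hcon
  push_neg at hcon
  -- hcon : 2 * B ^ p < ↑P.card
  have hexp1 : (2.7182818283:ℝ) ≤ Real.exp 1 := le_of_lt Real.exp_one_gt_d9
  have hlog2 : (0.6931471803:ℝ) ≤ Real.log 2 := le_of_lt Real.log_two_gt_d9
  have hC2e : 2*Real.exp 1 ≤ C := by
    rw [hCdef, le_div_iff₀ hε0]
    nlinarith [Real.exp_pos 1]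
  have hC0 : (0:ℝ) < C := by nlinarith
  have hlC : 1 + Real.log 2 ≤ Real.log C := by
    have h2e : Real.log (2*Real.exp 1) = Real.log 2 + 1 := by
      rw [Real.log_mul (by norm_num) (ne_of_gt (Real.exp_pos 1)), Real.log_exp]
    have := Real.log_le_log (by positivity) hC2e
    rw [h2e] at this; linarith
  have hlC0 : (0:ℝ) < Real.log C := by nlinarith
  have hB9 : (9:ℝ) ≤ B := by rw [hBdef]; nlinarith
  have hB0 : (0:ℝ) < B := by linarith
  -- the pdim bound on shattering
  have hPle : ∀ ℓ : ℕ, PShatters V ℓ → ℓ ≤ p := by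
    intro ℓ h
    have : (ℓ:ℕ∞) ≤ pdim V := le_sSup ⟨ℓ, rfl, h⟩
    rw [hp] at this
    exact_mod_cast this
  -- p ≥ 1 : otherwise two separated functions give a shattered point
  have hp1 : 1 ≤ p := by
    by_contra hp0
    have hp0' : p = 0 := by omega
    subst hp0'
    rw [pow_zero, mul_one] at hcon
    have hcard2 : 1 < P.card := by
      by_contra h
      push_neg at h
      have : (P.card : ℝ) ≤ 1 := by exact_mod_cast h
      linarith
    obtain ⟨f, hf, g, hg, hfg⟩ := Finset.one_lt_card.1 hcard2
    have hsep' := hsep f hf g hg hfg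
    have hne : ∃ x₀, f x₀ ≠ g x₀ := by
      by_contra h
      push_neg at h
      have : ∀ x, |f x - g x| = 0 := fun x => by rw [h x]; simp
      rw [show (fun x => |f x - g x|) = (fun _ => (0:ℝ)) from funext this] at hsep'
      · simp at hsep'; linarith
    obtain ⟨x₀, hx₀⟩ := hne
    have hsh : PShatters V 1 := by
      rcases lt_or_gt_of_ne hx₀ with h | h
      · exact ⟨fun _ => x₀, fun _ => f x₀, fun a => by
          cases ha : a 0
          · exact ⟨f, hPV hf, fun i => by rw [Subsingleton.elim i 0, ha]; simp⟩
          · exact ⟨g, hPV hg, fun i => by rw [Subsingleton.elim i 0, ha]; simpa using h⟩⟩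
      · exact ⟨fun _ => x₀, fun _ => g x₀, fun a => by
          cases ha : a 0
          · exact ⟨g, hPV hg, fun i => by rw [Subsingleton.elim i 0, ha]; simp⟩
          · exact ⟨f, hPV hf, fun i => by rw [Subsingleton.elim i 0, ha]; simpa using h⟩⟩
    exact absurd (hPle 1 hsh) (by omega)
  -- B^p bounds
  have hB1 : (1:ℝ) ≤ B := by linarith
  have hBp9 : (9:ℝ) ≤ B^p := by
    calc (9:ℝ) ≤ B := hB9
      _ = B^1 := (pow_one B).symm
      _ ≤ B^p := pow_le_pow_right₀ hB1 hp1
  have hBp0 : (0:ℝ) < B^p := by positivity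
  -- the subfamily Q
  set n : ℕ := ⌊2*B^p⌋₊ + 1 with hndef
  have hnR : (n:ℝ) = (⌊2*B^p⌋₊ : ℝ) + 1 := by rw [hndef]; push_cast; ring
  have hn_lo : 2*B^p < (n:ℝ) := by rw [hnR]; exact Nat.lt_floor_add_one _
  have hn0 : (0:ℝ) < (n:ℝ) := by positivity
  have hn_up : (n:ℝ) ≤ 2*B^p + 1 := by
    rw [hnR]
    have := Nat.floor_le (show (0:ℝ) ≤ 2*B^p by positivity)
    linarith
  have hn2 : 2 ≤ n := by
    have : (2:ℝ) ≤ (n:ℝ) := by linarith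
    exact_mod_cast this
  have hnP : n ≤ P.card := by
    have h1 : ⌊2*B^p⌋₊ < P.card := (Nat.floor_lt (by positivity)).2 hcon
    omega
  obtain ⟨Q, hQP, hQcard⟩ := Finset.exists_subset_card_eq hnP
  have hQV : ∀ v ∈ Q, v ∈ V := fun v hv => hPV (hQP hv)
  -- parameters
  set s : ℝ := ε/8 with hsdef
  have hs0 : 0 < s := by positivity
  have hsR : s ≤ 2*R := by rw [hsdef]; linarith
  set δ : ℝ := 15*ε/(16*R) with hδdef
  have hδ0 : 0 < δ := by positivity
  have hδ1 : δ ≤ 15/16 := by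
    rw [hδdef, div_le_div_iff₀ (by positivity) (by norm_num)]; nlinarith
  have hδC : δ = 15*Real.exp 1/(8*C) := by
    rw [hδdef, hCdef]
    rw [div_eq_div_iff (by positivity) (by positivity)]
    field_simp
    ring
  set m : ℕ := ⌈Real.log n / δ⌉₊ with hmdef
  have hlogn0 : 0 < Real.log n := by
    apply Real.log_pos
    have : (2:ℝ) ≤ (n:ℝ) := by exact_mod_cast hn2
    linarith
  have hm_lo : Real.log n / δ ≤ (m:ℝ) := Nat.le_ceil _
  have hm1 : 1 ≤ m := by
    rw [hmdef]
    have : (0:ℝ) < Real.log n / δ := div_pos hlogn0 hδ0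
    exact Nat.one_le_ceil_iff.2 this
  set K : ℕ := ⌈2*R/s⌉₊ - 1 with hKdef
  have hK1 : K + 1 = ⌈2*R/s⌉₊ := by
    have : 1 < ⌈2*R/s⌉₊ := by
      apply Nat.lt_ceil.2
      rw [hsdef]
      push_cast
      rw [lt_div_iff₀ (by positivity)]
      nlinarith
    omega
  have hKpos : 0 < K := by
    have : 2 < ⌈2*R/s⌉₊ := by
      apply Nat.lt_ceil.2
      rw [hsdef]
      push_cast
      rw [lt_div_iff₀ (by positivity)]
      nlinarith
    omega
  -- pair auxiliary functions
  have hpair : ∀ q : (X → ℝ) × (X → ℝ), ∃ ψ : X → ℝ, q ∈ Q.offDiag →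
      Measurable ψ ∧ (∀ x, 0 ≤ ψ x ∧ ψ x ≤ 2*R) ∧ (15/8*ε ≤ ∫ x, ψ x ∂ν) ∧
      (∀ᵐ x ∂ν, ψ x ≤ max (|q.1 x - q.2 x| - s) 0) := by
    intro q
    by_cases hq : q ∈ Q.offDiag
    swap
    · exact ⟨fun _ => 0, fun h => absurd h hq⟩
    obtain ⟨hq1, hq2, hqne⟩ := Finset.mem_offDiag.1 hq
    have hint := hsep q.1 (hQP hq1) q.2 (hQP hq2) hqne
    have habs : ∀ x, |q.1 x - q.2 x| ≤ 2*R := by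
      intro x
      obtain ⟨h1a, h1b⟩ := hVb q.1 (hQV _ hq1) x
      obtain ⟨h2a, h2b⟩ := hVb q.2 (hQV _ hq2) x
      rw [abs_le]; constructor <;> linarith
    have hInt : Integrable (fun x => |q.1 x - q.2 x|) ν := by
      by_contra h
      rw [MeasureTheory.integral_undef h] at hint
      linarith
    set φ : X → ℝ := hInt.1.mk _ with hφdef
    have hφmeas : Measurable φ := hInt.1.stronglyMeasurable_mk.measurable
    have hφae : (fun x => |q.1 x - q.2 x|) =ᵐ[ν] φ := hInt.1.ae_eq_mk
    refine ⟨fun x => max (min (φ x - s) (2*R)) 0, fun _ => ⟨?_, ?_, ?_, ?_⟩⟩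
    · exact ((hφmeas.sub measurable_const).min measurable_const).max measurable_const
    · intro x
      refine ⟨le_max_right _ _, ?_⟩
      apply max_le (le_trans (min_le_right _ _) le_rfl)
      linarith
    · -- integral lower bound
      have hψint : Integrable (fun x => max (min (φ x - s) (2*R)) 0) ν := by
        apply MeasureTheory.Integrable.mono' (integrable_const (2*R))
        · exact (((hφmeas.sub measurable_const).min measurable_const).max
            measurable_const).aestronglyMeasurable
        · apply Filter.Eventually.of_forall
          intro x
          rw [Real.norm_eq_abs, abs_of_nonneg (le_max_right _ _)]
          apply max_le (le_trans (min_le_right _ _) le_rfl)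
          linarith
      have hmono : ∀ᵐ x ∂ν, |q.1 x - q.2 x| - s ≤ max (min (φ x - s) (2*R)) 0 := by
        filter_upwards [hφae] with x hx
        rw [← hx]
        rcases le_or_gt (|q.1 x - q.2 x| - s) 0 with h | h
        · exact le_trans h (le_max_right _ _)
        · have : min (|q.1 x - q.2 x| - s) (2*R) = |q.1 x - q.2 x| - s := by
            apply min_eq_left
            have := habs x
            linarith
          rw [this]
          exact le_max_left _ _
      have hsub : Integrable (fun x => |q.1 x - q.2 x| - s) ν := hInt.sub (integrable_const s)
      have h1 : ∫ x, (|q.1 x - q.2 x| - s) ∂ν ≤ ∫ x, max (min (φ x - s) (2*R)) 0 ∂ν :=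
        MeasureTheory.integral_mono_ae hsub hψint hmono
      have h2 : ∫ x, (|q.1 x - q.2 x| - s) ∂ν = (∫ x, |q.1 x - q.2 x| ∂ν) - s := by
        rw [MeasureTheory.integral_sub hInt (integrable_const s)]
        simp [measure_univ]
      rw [h2] at h1
      rw [hsdef] at h1 ⊢
      linarith
    · -- a.e. upper bound
      filter_upwards [hφae] with x hx
      rw [← hx]
      apply max_le _ (le_max_right _ _)
      exact le_trans (min_le_left _ _) (le_max_left _ _)
  choose ψ hψ using hpair
  -- measure-theoretic stage
  letI : MeasureSpace X := ⟨ν⟩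
  haveI hvol : IsProbabilityMeasure (volume : Measure X) :=
    inferInstanceAs (IsProbabilityMeasure ν)
  set G : (Fin m → X) → ℝ :=
    fun x => ∑ q ∈ Q.offDiag, ∏ i : Fin m, (1 - ψ q (x i)/(2*R)) with hGdef
  obtain ⟨xh, hGx, hxE⟩ : ∃ xh : Fin m → X, G xh < n ∧
      ∀ q ∈ Q.offDiag, ∀ i : Fin m,
        ψ q (xh i) ≤ max (|q.1 (xh i) - q.2 (xh i)| - s) 0 := by
    have hfac : ∀ q ∈ Q.offDiag, ∀ y : X, 0 ≤ 1 - ψ q y/(2*R) ∧ 1 - ψ q y/(2*R) ≤ 1 := by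
      intro q hq y
      obtain ⟨h0, h1⟩ := (hψ q hq).2.1 y
      constructor
      · have : ψ q y/(2*R) ≤ 1 := by rw [div_le_one (by positivity)]; linarith
        linarith
      · have : 0 ≤ ψ q y/(2*R) := by positivity
        linarith
    have hψint : ∀ q ∈ Q.offDiag, Integrable (ψ q) ν := by
      intro q hq
      apply MeasureTheory.Integrable.mono' (integrable_const (2*R))
      · exact (hψ q hq).1.aestronglyMeasurable
      · apply Filter.Eventually.of_forall
        intro x
        rw [Real.norm_eq_abs, abs_of_nonneg ((hψ q hq).2.1 x).1]
        exact ((hψ q hq).2.1 x).2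
    have hbase : ∀ q ∈ Q.offDiag, (0 ≤ ∫ y, (1 - ψ q y/(2*R)) ∂ν ∧
        ∫ y, (1 - ψ q y/(2*R)) ∂ν ≤ 1 - δ) := by
      intro q hq
      have hint1 : Integrable (fun y => ψ q y/(2*R)) ν := (hψint q hq).div_const _
      have heq : ∫ y, (1 - ψ q y/(2*R)) ∂ν = 1 - (∫ y, ψ q y ∂ν)/(2*R) := by
        rw [MeasureTheory.integral_sub (integrable_const 1) hint1]
        rw [MeasureTheory.integral_div]
        simp [measure_univ]
      constructor
      · exact MeasureTheory.integral_nonneg (fun y => (hfac q hq y).1)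
      · rw [heq]
        have h1 : 15/8*ε ≤ ∫ y, ψ q y ∂ν := (hψ q hq).2.2.1
        have h2 : δ ≤ (∫ y, ψ q y ∂ν)/(2*R) := by
          rw [hδdef, div_le_div_iff₀ (by positivity) (by positivity)]
          nlinarith
        linarith
    -- integrability of the product pieces
    have hPi : ∀ q ∈ Q.offDiag,
        Integrable (fun x : Fin m → X => ∏ i : Fin m, (1 - ψ q (x i)/(2*R))) volume := by
      intro q hq
      apply MeasureTheory.Integrable.mono' (integrable_const 1)
      · apply Measurable.aestronglyMeasurable
        apply Finset.measurable_prod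
        intro i _
        exact measurable_const.sub (((hψ q hq).1.comp (measurable_pi_apply i)).div_const _)
      · apply Filter.Eventually.of_forall
        intro x
        rw [Real.norm_eq_abs, abs_of_nonneg (Finset.prod_nonneg fun i _ => (hfac q hq (x i)).1)]
        exact Finset.prod_le_one (fun i _ => (hfac q hq (x i)).1)
          (fun i _ => (hfac q hq (x i)).2)
    have hGint : Integrable G volume := by
      rw [hGdef]
      exact MeasureTheory.integrable_finset_sum _ hPi
    -- the integral of G
    have hGval : ∫ x, G x ≤ (n:ℝ) - 1 := by
      have h1 : ∫ x, G x = ∑ q ∈ Q.offDiag,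
          (∫ y, (1 - ψ q y/(2*R)) ∂ν)^m := by
        rw [hGdef, MeasureTheory.integral_finset_sum _ hPi]
        apply Finset.sum_congr rfl
        intro q hq
        have := MeasureTheory.integral_fintype_prod_eq_pow (ι := Fin m)
          (f := fun y : X => 1 - ψ q y/(2*R)) (μ := (volume : Measure X))
        rw [← MeasureTheory.volume_pi] at this
        rw [this, Fintype.card_fin]
        rfl
      have h2 : ∀ q ∈ Q.offDiag, (∫ y, (1 - ψ q y/(2*R)) ∂ν)^m ≤ 1/(n:ℝ) := by
        intro q hq
        obtain ⟨hb0, hb1⟩ := hbase q hq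
        have hstep1 : (∫ y, (1 - ψ q y/(2*R)) ∂ν)^m ≤ (1-δ)^m :=
          pow_le_pow_left₀ hb0 hb1 m
        have hstep2 : (1-δ)^m ≤ Real.exp (-δ)^m := by
          apply pow_le_pow_left₀ (by linarith)
          linarith [Real.add_one_le_exp (-δ)]
        have hstep3 : Real.exp (-δ)^m = Real.exp (-(δ*m)) := by
          rw [← Real.exp_nat_mul]; ring_nf
        have hstep4 : Real.exp (-(δ*m)) ≤ Real.exp (-Real.log n) := by
          apply Real.exp_le_exp.2
          have : Real.log n ≤ δ * m := by
            rw [div_le_iff₀ hδ0] at hm_lo; linarith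
          linarith
        have hstep5 : Real.exp (-Real.log n) = 1/(n:ℝ) := by
          rw [Real.exp_neg, Real.exp_log hn0, one_div]
        calc (∫ y, (1 - ψ q y/(2*R)) ∂ν)^m ≤ (1-δ)^m := hstep1
          _ ≤ Real.exp (-δ)^m := hstep2
          _ = Real.exp (-(δ*m)) := hstep3
          _ ≤ Real.exp (-Real.log n) := hstep4
          _ = 1/(n:ℝ) := hstep5
      have h3 : ∑ q ∈ Q.offDiag, (∫ y, (1 - ψ q y/(2*R)) ∂ν)^m
          ≤ (Q.offDiag.card : ℝ) * (1/(n:ℝ)) := by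
        calc ∑ q ∈ Q.offDiag, (∫ y, (1 - ψ q y/(2*R)) ∂ν)^m
            ≤ ∑ _q ∈ Q.offDiag, 1/(n:ℝ) := Finset.sum_le_sum h2
          _ = (Q.offDiag.card : ℝ) * (1/(n:ℝ)) := by rw [Finset.sum_const, nsmul_eq_mul]
      have h40 : Q.offDiag.card = n*n - n := by rw [Finset.offDiag_card, hQcard]
      have h4 : (Q.offDiag.card : ℝ) = (n:ℝ)*(n:ℝ) - (n:ℝ) := by
        rw [h40, Nat.cast_sub (Nat.le_mul_of_pos_left n (by omega))]
        push_cast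
        ring
      rw [h1]
      rw [h4] at h3
      have heq : ((n:ℝ)*(n:ℝ) - (n:ℝ)) * (1/(n:ℝ)) = (n:ℝ) - 1 := by
        field_simp
      linarith
    -- G measurable
    have hGmeas : Measurable G := by
      rw [hGdef]
      apply Finset.measurable_sum
      intro q hq
      apply Finset.measurable_prod
      intro i _
      exact measurable_const.sub (((hψ q hq).1.comp (measurable_pi_apply i)).div_const _)
    -- positivity of the good set
    have hA : volume {x : Fin m → X | G x < n} ≠ 0 := by
      intro h0
      have hae : ∀ᵐ x ∂(volume : Measure (Fin m → X)), (n:ℝ) ≤ G x := by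
        rw [ae_iff]
        convert h0 using 2
        ext x
        simp [not_le]
      have h1 : ∫ _x : Fin m → X, (n:ℝ) ≤ ∫ x, G x :=
        MeasureTheory.integral_mono_ae (integrable_const _) hGint hae
      rw [MeasureTheory.integral_const] at h1
      simp [measure_univ] at h1
      linarith
    -- the a.e. coordinate conditions
    have hEae : ∀ᵐ x : Fin m → X ∂volume, ∀ q ∈ Q.offDiag, ∀ i : Fin m,
        ψ q (x i) ≤ max (|q.1 (x i) - q.2 (x i)| - s) 0 := by
      rw [Filter.eventually_all_finset]
      intro q hq
      rw [MeasureTheory.ae_all_iff]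
      intro i
      have hev : ∀ᵐ y ∂ν, ψ q y ≤ max (|q.1 y - q.2 y| - s) 0 := (hψ q hq).2.2.2
      have htend : Filter.Tendsto (Function.eval i) (ae (volume : Measure (Fin m → X)))
          (ae (volume : Measure X)) := by
        have := MeasureTheory.Measure.tendsto_eval_ae_ae (μ := fun _ : Fin m => (volume : Measure X)) (i := i)
        rwa [← MeasureTheory.volume_pi] at this
      exact htend.eventually hev
    -- conclude
    by_contra hno
    have hsubset : {x : Fin m → X | G x < n} ⊆
        {x : Fin m → X | ¬ ∀ q ∈ Q.offDiag, ∀ i : Fin m,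
          ψ q (x i) ≤ max (|q.1 (x i) - q.2 (x i)| - s) 0} := by
      intro x hx
      intro hprops
      exact hno ⟨x, hx, hprops⟩
    have h0 : volume {x : Fin m → X | ¬ ∀ q ∈ Q.offDiag, ∀ i : Fin m,
        ψ q (x i) ≤ max (|q.1 (x i) - q.2 (x i)| - s) 0} = 0 := by
      exact hEae
    exact hA (le_antisymm (le_trans (measure_mono hsubset) (le_of_eq h0)) (zero_le))
  -- counting stage
  set t : Fin K → ℝ := fun j => -R + ((j:ℕ)+1)*s with htdef
  set cutc : (X → ℝ) × (X → ℝ) → Fin m → Finset (Fin K) :=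
    fun q i => Finset.univ.filter fun j =>
      min (q.1 (xh i)) (q.2 (xh i)) < t j ∧ t j < max (q.1 (xh i)) (q.2 (xh i)) with hcutdef
  set badj : (X → ℝ) × (X → ℝ) → Finset (Fin m → Fin K) :=
    fun q => Fintype.piFinset (fun i => Finset.univ \ cutc q i) with hbadjdef
  obtain ⟨jh, hjh⟩ : ∃ jh : Fin m → Fin K,
      ((Q.offDiag.filter fun q => jh ∈ badj q).card) ≤ n - 1 := by
    have hcut : ∀ q ∈ Q.offDiag, ∀ i : Fin m,
        (K:ℝ) * ψ q (xh i) ≤ 2*R*((cutc q i).card) := by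
      intro q hq i
      obtain ⟨hq1, hq2, hqne⟩ := Finset.mem_offDiag.1 hq
      obtain ⟨h1a, h1b⟩ := hVb q.1 (hQV _ hq1) (xh i)
      obtain ⟨h2a, h2b⟩ := hVb q.2 (hQV _ hq2) (xh i)
      have := grid_count R s K hR hs0 hsR hK1
        (min (q.1 (xh i)) (q.2 (xh i))) (max (q.1 (xh i)) (q.2 (xh i))) (ψ q (xh i))
        (le_min h1a h2a) (max_le h1b h2b) ((hψ q hq).2.1 (xh i)).1
        (by rw [max_sub_min_eq_abs, abs_sub_comm]; exact hxE q hq i)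
      rw [hcutdef, htdef]
      exact this
    have hcle : ∀ q (i : Fin m), (cutc q i).card ≤ K := by
      intro q i
      calc (cutc q i).card ≤ (Finset.univ : Finset (Fin K)).card := Finset.card_le_card (Finset.subset_univ _)
        _ = K := by simp
    have hbadcard : ∀ q ∈ Q.offDiag,
        ((badj q).card : ℝ) ≤ (K:ℝ)^m * ∏ i : Fin m, (1 - ψ q (xh i)/(2*R)) := by
      intro q hq
      have h1 : (badj q).card = ∏ i : Fin m, (K - (cutc q i).card) := by
        rw [hbadjdef]
        rw [Fintype.card_piFinset]
        apply Finset.prod_congr rfl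
        intro i _
        rw [Finset.card_sdiff_of_subset (Finset.subset_univ _)]
        simp
      have h2 : ((badj q).card : ℝ) = ∏ i : Fin m, ((K:ℝ) - ((cutc q i).card:ℝ)) := by
        rw [h1]
        push_cast [Nat.cast_sub (hcle q _)]
        rfl
      rw [h2]
      have h3 : ∀ i : Fin m, (K:ℝ) - ((cutc q i).card:ℝ) ≤ (K:ℝ) * (1 - ψ q (xh i)/(2*R)) := by
        intro i
        have hc := hcut q hq i
        have : (K:ℝ) * ψ q (xh i) / (2*R) ≤ ((cutc q i).card:ℝ) := by
          rw [div_le_iff₀ (by positivity)]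
          linarith
        have hexp : (K:ℝ) * (1 - ψ q (xh i)/(2*R)) = (K:ℝ) - (K:ℝ) * ψ q (xh i) / (2*R) := by
          ring
        rw [hexp]
        linarith
      calc ∏ i : Fin m, ((K:ℝ) - ((cutc q i).card:ℝ))
          ≤ ∏ i : Fin m, (K:ℝ) * (1 - ψ q (xh i)/(2*R)) := by
            apply Finset.prod_le_prod
            · intro i _
              have := hcle q i
              have : ((cutc q i).card:ℝ) ≤ (K:ℝ) := by exact_mod_cast this
              linarith
            · intro i _; exact h3 i
        _ = (K:ℝ)^m * ∏ i : Fin m, (1 - ψ q (xh i)/(2*R)) := by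
            rw [Finset.prod_mul_distrib, Finset.prod_const]
            simp
    -- sum swap
    have hswap : ∑ jh : Fin m → Fin K, ((Q.offDiag.filter fun q => jh ∈ badj q).card)
        = ∑ q ∈ Q.offDiag, (badj q).card := by
      simp_rw [Finset.card_filter]
      rw [Finset.sum_comm]
      apply Finset.sum_congr rfl
      intro q _
      rw [← Finset.card_filter]
      congr 1
      ext jh
      simp
    by_contra hno
    push_neg at hno
    have hno' : ∀ jh : Fin m → Fin K, n ≤ (Q.offDiag.filter fun q => jh ∈ badj q).card := by
      intro jh
      have := hno jh
      omega
    have hlow : (Fintype.card (Fin m → Fin K)) * n ≤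
        ∑ jh : Fin m → Fin K, ((Q.offDiag.filter fun q => jh ∈ badj q).card) := by
      calc (Fintype.card (Fin m → Fin K)) * n
          = ∑ _jh : Fin m → Fin K, n := by rw [Finset.sum_const, Finset.card_univ, smul_eq_mul]
        _ ≤ _ := Finset.sum_le_sum (fun jh _ => hno' jh)
    have hKm : (Fintype.card (Fin m → Fin K) : ℝ) = (K:ℝ)^m := by
      rw [Fintype.card_fun, Fintype.card_fin, Fintype.card_fin]
      push_cast
      rfl
    have hup : (∑ q ∈ Q.offDiag, ((badj q).card:ℝ)) < (K:ℝ)^m * n := by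
      have h1 : (∑ q ∈ Q.offDiag, ((badj q).card:ℝ))
          ≤ (K:ℝ)^m * ∑ q ∈ Q.offDiag, ∏ i : Fin m, (1 - ψ q (xh i)/(2*R)) := by
        rw [Finset.mul_sum]
        exact Finset.sum_le_sum hbadcard
      have hKm0 : (0:ℝ) < (K:ℝ)^m := by positivity
      have h2 : (K:ℝ)^m * (∑ q ∈ Q.offDiag, ∏ i : Fin m, (1 - ψ q (xh i)/(2*R)))
          < (K:ℝ)^m * n := by
        apply mul_lt_mul_of_pos_left hGx hKm0
      linarith
    have hcast : ((Fintype.card (Fin m → Fin K)) * n : ℝ) ≤ ∑ q ∈ Q.offDiag, ((badj q).card:ℝ) := by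
      have := hlow
      calc ((Fintype.card (Fin m → Fin K)) * n : ℝ)
          ≤ (∑ jh : Fin m → Fin K, ((Q.offDiag.filter fun q => jh ∈ badj q).card) : ℕ) := by
            exact_mod_cast this
        _ = ∑ q ∈ Q.offDiag, ((badj q).card:ℝ) := by rw [hswap]; push_cast; rfl
    rw [hKm] at hcast
    linarith
  -- patterns
  set Sv : (X → ℝ) → Finset (Fin m) :=
    fun v => Finset.univ.filter fun i => t (jh i) < v (xh i) with hSvdef
  set 𝒜 : Finset (Finset (Fin m)) := Q.image Sv with h𝒜def
  have hcount : n + 1 ≤ 2 * 𝒜.card := by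
    have hcoll_sub : Q.offDiag.filter (fun q => Sv q.1 = Sv q.2)
        ⊆ Q.offDiag.filter (fun q => jh ∈ badj q) := by
      intro q hq
      obtain ⟨hq0, hSveq⟩ := Finset.mem_filter.1 hq
      refine Finset.mem_filter.2 ⟨hq0, ?_⟩
      rw [hbadjdef]
      rw [Fintype.mem_piFinset]
      intro i
      rw [Finset.mem_sdiff]
      refine ⟨Finset.mem_univ _, ?_⟩
      intro hcut
      rw [hcutdef] at hcut
      obtain ⟨hlt1, hlt2⟩ := (Finset.mem_filter.1 hcut).2
      have hiSv : (i ∈ Sv q.1) ↔ (i ∈ Sv q.2) := by rw [hSveq]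
      rw [hSvdef] at hiSv
      simp only [Finset.mem_filter, Finset.mem_univ, true_and] at hiSv
      rcases lt_max_iff.1 hlt2 with h | h
      · have hub : t (jh i) < q.2 (xh i) := hiSv.1 h
        rcases min_lt_iff.1 hlt1 with h' | h' <;> linarith
      · have hua : t (jh i) < q.1 (xh i) := hiSv.2 h
        rcases min_lt_iff.1 hlt1 with h' | h' <;> linarith
    have hcollcard : (Q.offDiag.filter fun q => Sv q.1 = Sv q.2).card ≤ n - 1 :=
      le_trans (Finset.card_le_card hcoll_sub) hjh
    have hfib : Q.card = ∑ y ∈ 𝒜, (Q.filter fun v => Sv v = y).card := by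
      apply Finset.card_eq_sum_card_fiberwise
      intro v hv
      rw [h𝒜def]
      exact Finset.mem_image_of_mem Sv hv
    set D : Finset ((X → ℝ) × (X → ℝ)) :=
      𝒜.biUnion (fun y => (Q.filter fun v => Sv v = y).offDiag) with hDdef
    have hD_disj : ∀ y ∈ 𝒜, ∀ y' ∈ 𝒜, y ≠ y' →
        Disjoint ((Q.filter fun v => Sv v = y).offDiag)
          ((Q.filter fun v => Sv v = y').offDiag) := by
      intro y _ y' _ hyy'
      rw [Finset.disjoint_left]
      intro q hq hq'
      obtain ⟨h1, _, _⟩ := Finset.mem_offDiag.1 hq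
      obtain ⟨h1', _, _⟩ := Finset.mem_offDiag.1 hq'
      exact hyy' ((Finset.mem_filter.1 h1).2.symm.trans (Finset.mem_filter.1 h1').2)
    have hDcard : D.card = ∑ y ∈ 𝒜, ((Q.filter fun v => Sv v = y).offDiag).card :=
      Finset.card_biUnion hD_disj
    have hD_sub : D ⊆ Q.offDiag.filter (fun q => Sv q.1 = Sv q.2) := by
      intro q hq
      obtain ⟨y, hy, hqy⟩ := Finset.mem_biUnion.1 hq
      obtain ⟨h1, h2, h3⟩ := Finset.mem_offDiag.1 hqy
      refine Finset.mem_filter.2 ⟨Finset.mem_offDiag.2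
        ⟨(Finset.mem_filter.1 h1).1, (Finset.mem_filter.1 h2).1, h3⟩, ?_⟩
      rw [(Finset.mem_filter.1 h1).2, (Finset.mem_filter.1 h2).2]
    have hDle : D.card ≤ n - 1 := le_trans (Finset.card_le_card hD_sub) hcollcard
    have hsum : 2*n ≤ D.card + 2*𝒜.card := by
      calc 2*n = ∑ y ∈ 𝒜, 2*(Q.filter fun v => Sv v = y).card := by
            rw [← Finset.mul_sum, ← hfib, hQcard]
        _ ≤ ∑ y ∈ 𝒜, (((Q.filter fun v => Sv v = y).offDiag).card + 2) := by
            apply Finset.sum_le_sum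
            intro y _
            rw [Finset.offDiag_card]
            exact nat_aux _
        _ = D.card + 2*𝒜.card := by
            rw [Finset.sum_add_distrib, Finset.sum_const, smul_eq_mul, ← hDcard]
            ring
    omega
  have hsauer : (𝒜.card : ℝ) ≤ ∑ i ∈ Finset.range (p+1), (m.choose i : ℝ) := by
    have hshat : ∀ u : Finset (Fin m), 𝒜.Shatters u → u.card ≤ p := by
      intro u hsh
      by_contra hbig
      push_neg at hbig
      obtain ⟨u', hu'sub, hu'card⟩ := Finset.exists_subset_card_eq (show p+1 ≤ u.card by omega)
      have hsh' : 𝒜.Shatters u' := hsh.mono_right hu'sub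
      have hPS : PShatters V (p+1) := by
        set o := u'.orderIsoOfFin hu'card with hodef
        refine ⟨fun k => xh (o k), fun k => t (jh (o k)), ?_⟩
        intro a
        set T : Finset (Fin m) :=
          (Finset.univ.filter (fun k => a k = true)).image (fun k => (o k : Fin m)) with hT
        have hTsub : T ⊆ u' := by
          intro i hi
          obtain ⟨k, _, hk⟩ := Finset.mem_image.1 hi
          rw [← hk]
          exact (o k).2
        obtain ⟨w, hw, hwT⟩ := hsh' hTsub
        obtain ⟨v, hvQ, hvw⟩ := Finset.mem_image.1 (h𝒜def ▸ hw)
        refine ⟨v, hQV v hvQ, ?_⟩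
        intro k
        have hmemu' : (o k : Fin m) ∈ u' := (o k).2
        have hchain1 : (v (xh (o k)) > t (jh (o k))) ↔ ((o k : Fin m) ∈ Sv v) := by
          rw [hSvdef]
          simp only [Finset.mem_filter, Finset.mem_univ, true_and, gt_iff_lt]
        have hchain2 : ((o k : Fin m) ∈ Sv v) ↔ ((o k : Fin m) ∈ T) := by
          rw [← hvw] at hwT
          constructor
          · intro h
            rw [← hwT]
            exact Finset.mem_inter.2 ⟨hmemu', h⟩
          · intro h
            rw [← hwT] at h
            exact (Finset.mem_inter.1 h).2
        have hchain3 : ((o k : Fin m) ∈ T) ↔ (a k = true) := by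
          rw [hT]
          constructor
          · intro h
            obtain ⟨k', hk', hkk⟩ := Finset.mem_image.1 h
            have : k' = k := by
              apply o.injective
              exact Subtype.coe_injective hkk
            rw [← this]
            exact (Finset.mem_filter.1 hk').2
          · intro h
            exact Finset.mem_image.2 ⟨k, Finset.mem_filter.2 ⟨Finset.mem_univ _, h⟩, rfl⟩
        rw [hchain1, hchain2, hchain3]
      have := hPle (p+1) hPS
      omega
    have h1 : 𝒜.card ≤ 𝒜.shatterer.card := Finset.card_le_card_shatterer 𝒜
    have h2 : 𝒜.shatterer ⊆ (Finset.range (p+1)).biUnion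
        (fun i => Finset.powersetCard i (Finset.univ : Finset (Fin m))) := by
      intro u hu
      have hsh := Finset.mem_shatterer.1 hu
      have hcard := hshat u hsh
      exact Finset.mem_biUnion.2 ⟨u.card, Finset.mem_range.2 (by omega),
        Finset.mem_powersetCard.2 ⟨Finset.subset_univ _, rfl⟩⟩
    have h3 : 𝒜.shatterer.card ≤ ∑ i ∈ Finset.range (p+1),
        (Finset.powersetCard i (Finset.univ : Finset (Fin m))).card :=
      le_trans (Finset.card_le_card h2) (Finset.card_biUnion_le)
    have h4 : ∀ i, (Finset.powersetCard i (Finset.univ : Finset (Fin m))).card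
        = m.choose i := by
      intro i
      rw [Finset.card_powersetCard, Finset.card_univ, Fintype.card_fin]
    have h5 : 𝒜.card ≤ ∑ i ∈ Finset.range (p+1), m.choose i := by
      calc 𝒜.card ≤ 𝒜.shatterer.card := h1
        _ ≤ ∑ i ∈ Finset.range (p+1),
            (Finset.powersetCard i (Finset.univ : Finset (Fin m))).card := h3
        _ = ∑ i ∈ Finset.range (p+1), m.choose i := Finset.sum_congr rfl (fun i _ => h4 i)
    calc (𝒜.card : ℝ) ≤ ((∑ i ∈ Finset.range (p+1), m.choose i : ℕ) : ℝ) := by exact_mod_cast h5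
      _ = ∑ i ∈ Finset.range (p+1), (m.choose i : ℝ) := by push_cast; rfl
  -- conclusion
  have hkey := key_bound C hC2e p n m hp1
    (by rw [hnR, hBdef]) (by rw [hmdef, hδC])
  have hfin : (n:ℝ) + 1 ≤ 2 * B^p := by
    have h1 : ((n:ℝ) + 1) ≤ 2 * (𝒜.card:ℝ) := by exact_mod_cast hcount
    calc (n:ℝ) + 1 ≤ 2 * (𝒜.card:ℝ) := h1
      _ ≤ 2 * ∑ i ∈ Finset.range (p+1), (m.choose i : ℝ) := by linarith [hsauer]
      _ ≤ 2 * B^p := by rw [hBdef] at *; linarith [hkey]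
  linarith
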